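/- arXiv:2008.12064 — 3 statements merged into one kernel-verified Lean document; each statement's English description precedes it below -/
import Mathlib

section
/- For unit vectors u, v, w in a complex Hilbert space, arccos|⟨u|w⟩| ≤ arccos|⟨u|v⟩| + arccos|⟨v|w⟩| (triangle inequality for the Fubini–Study angle). Equivalently, arccos|⟨φ|ψ̃⟩| ≥ arccos|⟨φ|ψ⟩| − arccos|⟨ψ|ψ̃⟩|. -/
open InnerProductSpace Real

lemma my_arccos_anti {x y : ℝ} (h : x ≤ y) : Real.arccos y ≤ Real.arccos x := by
  unfold Real.arccos; linarith [Real.monotone_arcsin h]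

local notation "⟪" x ", " y "⟫" => @inner ℂ _ _ x y

-- norm of the orthogonal complement part
lemma perp_norm {H : Type*} [NormedAddCommGroup H] [InnerProductSpace ℂ H]
    (u v : H) (hu : ‖u‖ = 1) (hv : ‖v‖ = 1) :
    ‖u - ⟪v, u⟫ • v‖ = Real.sqrt (1 - ‖⟪u, v⟫‖ ^ 2) := by
  have hperp : ⟪⟪v, u⟫ • v, u - ⟪v, u⟫ • v⟫ = 0 := by
    simp only [inner_sub_right, inner_smul_left, inner_smul_right,
      inner_self_eq_norm_sq_to_K, hv]
    rw [RCLike.conj_mul, norm_smul, hv, mul_one]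
    ring
  have hdecomp : u = ⟪v, u⟫ • v + (u - ⟪v, u⟫ • v) := by abel
  have hpyth := norm_add_sq_eq_norm_sq_add_norm_sq_of_inner_eq_zero _ _ hperp
  rw [← hdecomp, hu] at hpyth
  have hsmul : ‖⟪v, u⟫ • v‖ ^ 2 = ‖⟪u, v⟫‖ ^ 2 := by
    rw [norm_smul, hv, mul_one, ← inner_conj_symm u v, RCLike.norm_conj]
  have : ‖u - ⟪v, u⟫ • v‖ ^ 2 = 1 - ‖⟪u, v⟫‖ ^ 2 := by
    rw [← hsmul]; linarith
  rw [← this, Real.sqrt_sq (norm_nonneg _)]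

lemma key_ineq {H : Type*} [NormedAddCommGroup H] [InnerProductSpace ℂ H]
    (u v w : H) (hu : ‖u‖ = 1) (hv : ‖v‖ = 1) (hw : ‖w‖ = 1) :
    ‖⟪u, v⟫‖ * ‖⟪v, w⟫‖ -
      Real.sqrt (1 - ‖⟪u, v⟫‖ ^ 2) * Real.sqrt (1 - ‖⟪v, w⟫‖ ^ 2) ≤ ‖⟪u, w⟫‖ := by
  set u' := u - ⟪v, u⟫ • v with hu'
  set w' := w - ⟪v, w⟫ • v with hw'
  have hvu' : ⟪v, u'⟫ = 0 := by
    simp [hu', inner_sub_right, inner_smul_right, inner_self_eq_norm_sq_to_K, hv]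
  have hvw' : ⟪v, w'⟫ = 0 := by
    simp [hw', inner_sub_right, inner_smul_right, inner_self_eq_norm_sq_to_K, hv]
  have hu'v : ⟪u', v⟫ = 0 := by rw [← inner_conj_symm, hvu', map_zero]
  have hsplit : ⟪u, w⟫ = ⟪u, v⟫ * ⟪v, w⟫ + ⟪u', w'⟫ := by
    have h1 : u = ⟪v, u⟫ • v + u' := by rw [hu']; abel
    have h2 : w = ⟪v, w⟫ • v + w' := by rw [hw']; abel
    calc ⟪u, w⟫ = ⟪⟪v, u⟫ • v + u', ⟪v, w⟫ • v + w'⟫ := by rw [← h1, ← h2]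
    _ = ⟪u, v⟫ * ⟪v, w⟫ + ⟪u', w'⟫ := by
        rw [inner_add_left, inner_add_right, inner_add_right,
          inner_smul_left, inner_smul_right, inner_smul_left, inner_smul_right,
          hvw', hu'v, inner_self_eq_norm_sq_to_K, hv]
        rw [← inner_conj_symm u v, inner_conj_symm]
        push_cast
        ring
  have hab : ‖⟪u, v⟫‖ * ‖⟪v, w⟫‖ ≤ ‖⟪u, w⟫‖ + ‖⟪u', w'⟫‖ := by
    calc ‖⟪u, v⟫‖ * ‖⟪v, w⟫‖ = ‖⟪u, v⟫ * ⟪v, w⟫‖ := (norm_mul _ _).symm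
    _ = ‖⟪u, w⟫ - ⟪u', w'⟫‖ := by rw [hsplit]; ring_nf
    _ ≤ ‖⟪u, w⟫‖ + ‖⟪u', w'⟫‖ := norm_sub_le _ _
  have hcs : ‖⟪u', w'⟫‖ ≤ Real.sqrt (1 - ‖⟪u, v⟫‖ ^ 2) * Real.sqrt (1 - ‖⟪v, w⟫‖ ^ 2) := by
    calc ‖⟪u', w'⟫‖ ≤ ‖u'‖ * ‖w'‖ := norm_inner_le_norm _ _
    _ = _ := by rw [hu', hw', perp_norm u v hu hv, perp_norm w v hw hv,
          ← inner_conj_symm w v, RCLike.norm_conj]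
  linarith

theorem stmt_3 {H : Type*} [NormedAddCommGroup H] [InnerProductSpace ℂ H]
    (u v w : H) (hu : ‖u‖ = 1) (hv : ‖v‖ = 1) (hw : ‖w‖ = 1) :
    Real.arccos ‖(inner ℂ u w : ℂ)‖ ≤
      Real.arccos ‖(inner ℂ u v : ℂ)‖ + Real.arccos ‖(inner ℂ v w : ℂ)‖ := by
  set a := ‖(inner ℂ u v : ℂ)‖ with ha
  set b := ‖(inner ℂ v w : ℂ)‖ with hb
  set c := ‖(inner ℂ u w : ℂ)‖ with hc
  have ha0 : 0 ≤ a := norm_nonneg _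
  have hb0 : 0 ≤ b := norm_nonneg _
  have hc0 : 0 ≤ c := norm_nonneg _
  have ha1 : a ≤ 1 := by
    calc a ≤ ‖u‖ * ‖v‖ := norm_inner_le_norm _ _
    _ = 1 := by rw [hu, hv, mul_one]
  have hb1 : b ≤ 1 := by
    calc b ≤ ‖v‖ * ‖w‖ := norm_inner_le_norm _ _
    _ = 1 := by rw [hv, hw, mul_one]
  have hkey := key_ineq u v w hu hv hw
  set s := Real.arccos a + Real.arccos b with hs
  have hs0 : 0 ≤ s := add_nonneg (Real.arccos_nonneg _) (Real.arccos_nonneg _)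
  have hsa : Real.arccos a ≤ π / 2 := by
    rw [← Real.arccos_zero]; exact my_arccos_anti ha0
  have hsb : Real.arccos b ≤ π / 2 := by
    rw [← Real.arccos_zero]; exact my_arccos_anti hb0
  have hspi : s ≤ π := by rw [hs]; linarith
  have hcos : Real.cos s = a * b - Real.sqrt (1 - a ^ 2) * Real.sqrt (1 - b ^ 2) := by
    rw [hs, Real.cos_add, Real.cos_arccos (by linarith) ha1,
      Real.cos_arccos (by linarith) hb1, Real.sin_arccos, Real.sin_arccos]
  have hcsc : Real.cos s ≤ c := by rw [hcos]; linarith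
  calc Real.arccos c ≤ Real.arccos (Real.cos s) := my_arccos_anti hcsc
  _ = s := Real.arccos_cos hs0 hspi
end

section
/- Let 0 < a₁ ≤ 1 and 0 ≤ F̂ with F̂ ≤ a₁. Define for c ∈ [F̂/√a₁, √a₁] the function L(c) = ((a₁ − c²)/(1 − c²)) · (1 − ((F̂/√a₁)·c + √(1 − F̂²/a₁)·√(1 − c²))²) (with L(c) = 0 when c² = 1). If a₁ = 1, then the supremum of L over this interval is at least 1 − F̂². (In fact, taking c = 1, i.e. c = √a₁, gives L = 1 − F̂² in a suitable limiting sense; more concretely, for a₁ = 1 and any c ∈ [F̂, 1), L(c) = 1 − (F̂c + √(1−F̂²)√(1−c²))², whose supremum as c → 1 equals 1 − F̂².) -/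
theorem stmt_5 (a₁ F : ℝ) (ha : a₁ = 1) (hF0 : 0 ≤ F) (hFa : F ≤ a₁) :
    1 - F ^ 2 ≤ sSup ((fun c : ℝ =>
        ((a₁ - c ^ 2) / (1 - c ^ 2)) *
          (1 - (F / Real.sqrt a₁ * c
            + Real.sqrt (1 - F ^ 2 / a₁) * Real.sqrt (1 - c ^ 2)) ^ 2)) ''
      Set.Ico (F / Real.sqrt a₁) (Real.sqrt a₁)) := by
  subst ha
  simp only [Real.sqrt_one, div_one]
  rcases eq_or_lt_of_le hFa with hF1 | hF1
  · -- F = 1 : the interval is empty, sSup ∅ = 0 and 1 - 1 = 0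
    subst hF1
    simp [Set.Ico_self, Real.sSup_empty]
  · -- F < 1
    set L : ℝ → ℝ := fun c : ℝ =>
        ((1 - c ^ 2) / (1 - c ^ 2)) *
          (1 - (F * c + Real.sqrt (1 - F ^ 2) * Real.sqrt (1 - c ^ 2)) ^ 2) with hL
    set S := L '' Set.Ico F 1 with hS
    -- On Ico F 1, L c = 1 - (F c + √(1-F²)√(1-c²))²
    have hval : ∀ c ∈ Set.Ico F 1,
        L c = 1 - (F * c + Real.sqrt (1 - F ^ 2) * Real.sqrt (1 - c ^ 2)) ^ 2 := by
      intro c hc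
      have hc0 : 0 ≤ c := le_trans hF0 hc.1
      have hc2 : c ^ 2 < 1 := by nlinarith [hc.2]
      have : (1 : ℝ) - c ^ 2 ≠ 0 := by nlinarith
      simp [hL, div_self this]
    -- S is bounded above by 1
    have hbdd : BddAbove S := by
      refine ⟨1, ?_⟩
      rintro x ⟨c, hc, rfl⟩
      rw [hval c hc]
      nlinarith [sq_nonneg (F * c + Real.sqrt (1 - F ^ 2) * Real.sqrt (1 - c ^ 2))]
    -- the filter 𝓝[Ico F 1] 1 is nontrivial
    have hne : (nhdsWithin (1 : ℝ) (Set.Ico F 1)).NeBot := by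
      rw [← mem_closure_iff_nhdsWithin_neBot, closure_Ico (ne_of_lt hF1)]
      exact Set.right_mem_Icc.2 hF1.le
    -- limit of L along this filter is 1 - F²
    have htend : Filter.Tendsto L (nhdsWithin (1 : ℝ) (Set.Ico F 1)) (nhds (1 - F ^ 2)) := by
      have h1 : Filter.Tendsto
          (fun c : ℝ => 1 - (F * c + Real.sqrt (1 - F ^ 2) * Real.sqrt (1 - c ^ 2)) ^ 2)
          (nhdsWithin (1 : ℝ) (Set.Ico F 1)) (nhds (1 - F ^ 2)) := by
        have hcont : Continuous (fun c : ℝ =>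
            1 - (F * c + Real.sqrt (1 - F ^ 2) * Real.sqrt (1 - c ^ 2)) ^ 2) := by
          continuity
        have := (hcont.tendsto 1).mono_left (nhdsWithin_le_nhds (s := Set.Ico F 1))
        simpa using this
      refine Filter.Tendsto.congr' ?_ h1
      filter_upwards [self_mem_nhdsWithin] with c hc
      exact (hval c hc).symm
    -- conclude
    refine le_of_tendsto htend ?_
    filter_upwards [self_mem_nhdsWithin] with c hc
    exact le_csSup hbdd ⟨c, hc, rfl⟩
end

section
/- Main GME lower bound: Let ρ be a density operator on a finite-dimensional tensor-product Hilbert space H₁ ⊗ ... ⊗ Hₙ with top eigenvalue a₁ > 0 and top eigenvector ψ₁. Suppose F̂ ∈ [0,1] satisfies ⟨φ|ρ|φ⟩ ≤ F̂² for every product unit vector φ, and F̂ ≤ a₁. Define the geometric measure of entanglement of a pure unit state ψ as E_G(ψ) = 1 − sup_{φ product unit vector} |⟨φ|ψ⟩|², and for mixed ρ as the convex-roof: E_G(ρ) = inf over ensemble decompositions ρ = Σⱼ ãⱼ|ψ̃ⱼ⟩⟨ψ̃ⱼ| of Σⱼ ãⱼ E_G(ψ̃ⱼ). Then for every c ∈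 [F̂/√a₁, √a₁] with c² < 1: E_G(ρ) ≥ ((a₁ − c²)/(1 − c²)) · (1 − ((F̂/√a₁)·c + √(1 − F̂²/a₁)·√(1 − c²))²). -/
noncomputable section

/-- The set of product unit vectors in `EuclideanSpace ℂ (∀ i, Fin (d i))`,
i.e. unit vectors of the form `φ₁ ⊗ ... ⊗ φₙ`. -/
def prodSet {n : ℕ} (d : Fin n → ℕ) : Set (EuclideanSpace ℂ (∀ i, Fin (d i))) :=
  {φ | ‖φ‖ = 1 ∧ ∃ f : ∀ i, Fin (d i) → ℂ, ∀ x, φ x = ∏ i, f i (x i)}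

/-- Geometric measure of entanglement of a pure state. -/
def egPure {n : ℕ} (d : Fin n → ℕ) (ψ : EuclideanSpace ℂ (∀ i, Fin (d i))) : ℝ :=
  1 - sSup {r : ℝ | ∃ φ ∈ prodSet d, r = ‖(inner ℂ φ ψ : ℂ)‖ ^ 2}

/-- The rank-one operator `|ψ⟩⟨ψ|`. -/
def rankOne {n : ℕ} (d : Fin n → ℕ) (ψ : EuclideanSpace ℂ (∀ i, Fin (d i))) :
    EuclideanSpace ℂ (∀ i, Fin (d i)) →L[ℂ] EuclideanSpace ℂ (∀ i, Fin (d i)) :=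
  (innerSL ℂ ψ).smulRight ψ

/-- Geometric measure of entanglement of a mixed state, via the convex roof. -/
def egMixed {n : ℕ} (d : Fin n → ℕ)
    (ρ : EuclideanSpace ℂ (∀ i, Fin (d i)) →L[ℂ] EuclideanSpace ℂ (∀ i, Fin (d i))) : ℝ :=
  sInf {r : ℝ | ∃ (m : ℕ) (w : Fin m → ℝ) (ψ : Fin m → EuclideanSpace ℂ (∀ i, Fin (d i))),
    (∀ j, 0 ≤ w j) ∧ (∑ j, w j = 1) ∧ (∀ j, ‖ψ j‖ = 1) ∧
    ρ = ∑ j, ((w j : ℂ) • rankOne d (ψ j)) ∧ r = ∑ j, w j * egPure d (ψ j)}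

section Aux

variable {E : Type*} [NormedAddCommGroup E] [InnerProductSpace ℂ E]

local notation "⟪" x ", " y "⟫" => @inner ℂ _ _ x y

open ComplexConjugate in
lemma fs_bound (u φ ψ : E) (hu : ‖u‖ = 1) (hφ : ‖φ‖ = 1) (hψ : ‖ψ‖ = 1) :
    ‖(⟪φ, ψ⟫ : ℂ)‖ ≤ ‖(⟪u, φ⟫ : ℂ)‖ * ‖(⟪u, ψ⟫ : ℂ)‖
      + Real.sqrt (1 - ‖(⟪u, φ⟫ : ℂ)‖ ^ 2) * Real.sqrt (1 - ‖(⟪u, ψ⟫ : ℂ)‖ ^ 2) := by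
  have huu : (⟪u, u⟫ : ℂ) = 1 := by
    rw [inner_self_eq_norm_sq_to_K, hu]; norm_num
  set a : ℂ := ⟪u, φ⟫ with ha
  set b : ℂ := ⟪u, ψ⟫ with hb
  set φ' := φ - a • u with hφ'
  set ψ' := ψ - b • u with hψ'
  have hoφ : (⟪u, φ'⟫ : ℂ) = 0 := by
    simp [hφ', inner_sub_right, inner_smul_right, huu, hu, ha]
  have hoψ : (⟪u, ψ'⟫ : ℂ) = 0 := by
    simp [hψ', inner_sub_right, inner_smul_right, huu, hu, hb]
  have hnorm : ∀ (x : E) (z : ℂ), ‖x‖ = 1 → (⟪u, x - z • u⟫ : ℂ) = 0 →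
      Real.sqrt (1 - ‖z‖ ^ 2) = ‖x - z • u‖ := by
    intro x z hx ho
    have horth : (⟪z • u, x - z • u⟫ : ℂ) = 0 := by
      rw [inner_smul_left, ho, mul_zero]
    have hdecomp : z • u + (x - z • u) = x := by abel
    have hpy := norm_add_sq_eq_norm_sq_add_norm_sq_of_inner_eq_zero (z • u) (x - z • u) horth
    rw [hdecomp, hx] at hpy
    have hns : ‖z • u‖ = ‖z‖ := by rw [norm_smul, hu, mul_one]
    rw [hns] at hpy
    have h2 : ‖x - z • u‖ ^ 2 = 1 - ‖z‖ ^ 2 := by linarith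
    rw [← h2, Real.sqrt_sq (norm_nonneg _)]
  have hnφ : Real.sqrt (1 - ‖a‖ ^ 2) = ‖φ'‖ := hnorm φ a hφ hoφ
  have hnψ : Real.sqrt (1 - ‖b‖ ^ 2) = ‖ψ'‖ := hnorm ψ b hψ hoψ
  have key : (⟪φ, ψ⟫ : ℂ) = conj a * b + ⟪φ', ψ'⟫ := by
    have hφd : φ = a • u + φ' := by rw [hφ']; abel
    have hψd : ψ = b • u + ψ' := by rw [hψ']; abel
    have hφ'u : (⟪φ', u⟫ : ℂ) = 0 := by
      rw [← inner_conj_symm, hoφ, map_zero]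
    conv_lhs => rw [hφd, hψd]
    rw [inner_add_left, inner_add_right, inner_add_right, inner_smul_left,
      inner_smul_right, inner_smul_left, inner_smul_right, huu, hoψ, hφ'u]
    ring
  calc ‖(⟪φ, ψ⟫ : ℂ)‖ = ‖conj a * b + (⟪φ', ψ'⟫ : ℂ)‖ := by rw [key]
    _ ≤ ‖conj a * b‖ + ‖(⟪φ', ψ'⟫ : ℂ)‖ := norm_add_le _ _
    _ ≤ ‖a‖ * ‖b‖ + ‖φ'‖ * ‖ψ'‖ := by
        gcongr
        · rw [norm_mul, RCLike.norm_conj]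
        · exact norm_inner_le_norm _ _
    _ = ‖a‖ * ‖b‖ + Real.sqrt (1 - ‖a‖ ^ 2) * Real.sqrt (1 - ‖b‖ ^ 2) := by
        rw [hnφ, hnψ]

lemma mono_bound {x x' y' y : ℝ} (hx0 : 0 ≤ x) (h1 : x ≤ x') (h2 : x' ≤ y') (h3 : y' ≤ y)
    (hy1 : y ≤ 1) :
    x * y + Real.sqrt (1 - x ^ 2) * Real.sqrt (1 - y ^ 2)
      ≤ x' * y' + Real.sqrt (1 - x' ^ 2) * Real.sqrt (1 - y' ^ 2) := by
  have hanti : ∀ {p q : ℝ}, p ≤ q → Real.arccos q ≤ Real.arccos p := by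
    intro p q h
    simp only [Real.arccos]
    have := Real.monotone_arcsin h
    linarith
  have e : ∀ p q : ℝ, -1 ≤ p → p ≤ 1 → -1 ≤ q → q ≤ 1 →
      p * q + Real.sqrt (1 - p ^ 2) * Real.sqrt (1 - q ^ 2)
        = Real.cos (Real.arccos p - Real.arccos q) := by
    intro p q hp1 hp2 hq1 hq2
    rw [Real.cos_sub, Real.cos_arccos hp1 hp2, Real.cos_arccos hq1 hq2,
      Real.sin_arccos, Real.sin_arccos]
  rw [e x y (by linarith) (by linarith) (by linarith) hy1,
    e x' y' (by linarith) (by linarith) (by linarith) (by linarith)]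
  apply Real.cos_le_cos_of_nonneg_of_le_pi
  · have := hanti h2; linarith
  · have := Real.arccos_le_pi x; have := Real.arccos_nonneg y; linarith
  · have := hanti h1; have := hanti h3; linarith

lemma quad_lower [CompleteSpace E] (ρ : E →L[ℂ] E) (hself : IsSelfAdjoint ρ)
    (hpos : ∀ v, 0 ≤ ((⟪v, ρ v⟫ : ℂ)).re)
    (a₁ : ℝ) (ψ₁ : E) (hψ₁ : ‖ψ₁‖ = 1) (heig : ρ ψ₁ = (a₁ : ℂ) • ψ₁) (φ : E) :
    a₁ * ‖(⟪ψ₁, φ⟫ : ℂ)‖ ^ 2 ≤ ((⟪φ, ρ φ⟫ : ℂ)).re := by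
  have huu : (⟪ψ₁, ψ₁⟫ : ℂ) = 1 := by
    rw [inner_self_eq_norm_sq_to_K, hψ₁]; norm_num
  set α : ℂ := ⟪ψ₁, φ⟫ with hα
  set v := φ - α • ψ₁ with hv
  have hov : (⟪ψ₁, v⟫ : ℂ) = 0 := by
    simp [hv, inner_sub_right, inner_smul_right, huu, hψ₁, hα]
  have hvo : (⟪v, ψ₁⟫ : ℂ) = 0 := by
    rw [← inner_conj_symm, hov, map_zero]
  have hρv : (⟪ψ₁, ρ v⟫ : ℂ) = 0 := by
    have h := hself.isSymmetric ψ₁ v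
    simp only [ContinuousLinearMap.coe_coe] at h
    rw [← h, heig, inner_smul_left, hov, mul_zero]
  have hφd : φ = α • ψ₁ + v := by rw [hv]; abel
  have key : (⟪φ, ρ φ⟫ : ℂ) = (a₁ : ℂ) * (Complex.normSq α : ℂ) + ⟪v, ρ v⟫ := by
    conv_lhs => rw [hφd]
    rw [map_add, map_smul, heig]
    simp only [inner_add_left, inner_add_right, inner_smul_left, inner_smul_right,
      huu, hρv, hvo, mul_zero, zero_mul, mul_one, add_zero, zero_add]
    rw [← Complex.mul_conj α]
    ring
  rw [key]
  have h2 : ((a₁ : ℂ) * (Complex.normSq α : ℂ)).re = a₁ * ‖α‖ ^ 2 := by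
    rw [← Complex.ofReal_mul, Complex.ofReal_re, Complex.normSq_eq_norm_sq]
  simp only [Complex.add_re, h2]
  have := hpos v
  linarith


end Aux

set_option maxHeartbeats 2000000 in
theorem stmt_6 {n : ℕ} (d : Fin n → ℕ)
    (ρ : EuclideanSpace ℂ (∀ i, Fin (d i)) →L[ℂ] EuclideanSpace ℂ (∀ i, Fin (d i)))
    (hself : IsSelfAdjoint ρ)
    (hpos : ∀ v, 0 ≤ ((inner ℂ v (ρ v) : ℂ)).re)
    (htrace : LinearMap.trace ℂ _ (ρ : EuclideanSpace ℂ (∀ i, Fin (d i)) →ₗ[ℂ]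
      EuclideanSpace ℂ (∀ i, Fin (d i))) = 1)
    (a₁ : ℝ) (ψ₁ : EuclideanSpace ℂ (∀ i, Fin (d i)))
    (ha : 0 < a₁) (hψ₁ : ‖ψ₁‖ = 1) (heig : ρ ψ₁ = (a₁ : ℂ) • ψ₁)
    (htop : ∀ (μ : ℝ) (v : EuclideanSpace ℂ (∀ i, Fin (d i))),
      v ≠ 0 → ρ v = (μ : ℂ) • v → μ ≤ a₁)
    (F : ℝ) (hF : F ∈ Set.Icc (0 : ℝ) 1) (hFa : F ≤ a₁)
    (hover : ∀ φ ∈ prodSet d, ((inner ℂ φ (ρ φ) : ℂ)).re ≤ F ^ 2)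
    (c : ℝ) (hc1 : F / Real.sqrt a₁ ≤ c) (hc2 : c ≤ Real.sqrt a₁) (hc3 : c ^ 2 < 1) :
    ((a₁ - c ^ 2) / (1 - c ^ 2)) *
        (1 - (F / Real.sqrt a₁ * c
          + Real.sqrt (1 - F ^ 2 / a₁) * Real.sqrt (1 - c ^ 2)) ^ 2)
      ≤ egMixed d ρ := by
  classical
  have hsa0 : 0 < Real.sqrt a₁ := Real.sqrt_pos.mpr ha
  have hsa : Real.sqrt a₁ ^ 2 = a₁ := Real.sq_sqrt ha.le
  set x' : ℝ := F / Real.sqrt a₁ with hx'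
  have hx'0 : 0 ≤ x' := div_nonneg hF.1 hsa0.le
  have hc0 : 0 ≤ c := le_trans hx'0 hc1
  have hcl1 : c < 1 := by nlinarith
  have hx'sq : x' ^ 2 = F ^ 2 / a₁ := by rw [hx', div_pow, hsa]
  set K : ℝ := x' * c + Real.sqrt (1 - F ^ 2 / a₁) * Real.sqrt (1 - c ^ 2) with hK
  have hKform : K = x' * c + Real.sqrt (1 - x' ^ 2) * Real.sqrt (1 - c ^ 2) := by
    rw [hK, hx'sq]
  have hx'1 : x' ≤ 1 := le_trans hc1 hcl1.le
  have hp : Real.sqrt (1 - x' ^ 2) ^ 2 = 1 - x' ^ 2 := Real.sq_sqrt (by nlinarith)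
  have hq : Real.sqrt (1 - c ^ 2) ^ 2 = 1 - c ^ 2 := Real.sq_sqrt (by nlinarith)
  have hK0 : 0 ≤ K := by
    rw [hKform]
    have := Real.sqrt_nonneg (1 - x' ^ 2)
    have := Real.sqrt_nonneg (1 - c ^ 2)
    nlinarith
  have hK2 : K ^ 2 ≤ 1 := by
    rw [hKform]
    nlinarith [sq_nonneg (x' * Real.sqrt (1 - c ^ 2) - c * Real.sqrt (1 - x' ^ 2)), hp, hq,
      Real.sqrt_nonneg (1 - x' ^ 2), Real.sqrt_nonneg (1 - c ^ 2),
      mul_nonneg hx'0 hc0]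
  -- nonnegativity of egPure
  have hEgP : ∀ ψ : EuclideanSpace ℂ (∀ i, Fin (d i)), ‖ψ‖ = 1 → 0 ≤ egPure d ψ := by
    intro ψ hψn
    have hs : sSup {r : ℝ | ∃ φ ∈ prodSet d, r = ‖(inner ℂ φ ψ : ℂ)‖ ^ 2} ≤ 1 := by
      apply Real.sSup_le _ zero_le_one
      rintro r ⟨φ, hφ, rfl⟩
      have h := norm_inner_le_norm (𝕜 := ℂ) φ ψ
      rw [hφ.1, hψn, mul_one] at h
      nlinarith [norm_nonneg (inner ℂ φ ψ : ℂ)]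
    unfold egPure
    linarith
  -- key bound for high-overlap states
  have hKey : ∀ ψ : EuclideanSpace ℂ (∀ i, Fin (d i)), ‖ψ‖ = 1 →
      c ≤ ‖(inner ℂ ψ₁ ψ : ℂ)‖ → 1 - K ^ 2 ≤ egPure d ψ := by
    intro ψ hψn hcγ
    have hγ1 : ‖(inner ℂ ψ₁ ψ : ℂ)‖ ≤ 1 := by
      have h := norm_inner_le_norm (𝕜 := ℂ) ψ₁ ψ
      rw [hψ₁, hψn, mul_one] at h
      exact h
    have hsup : sSup {r : ℝ | ∃ φ ∈ prodSet d, r = ‖(inner ℂ φ ψ : ℂ)‖ ^ 2} ≤ K ^ 2 := by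
      apply Real.sSup_le _ (sq_nonneg K)
      rintro r ⟨φ, hφ, rfl⟩
      have hxb : ‖(inner ℂ ψ₁ φ : ℂ)‖ ≤ x' := by
        have h1 := quad_lower ρ hself hpos a₁ ψ₁ hψ₁ heig φ
        have h2 := hover φ hφ
        have h3 : ‖(inner ℂ ψ₁ φ : ℂ)‖ ^ 2 ≤ x' ^ 2 := by
          rw [hx'sq, le_div_iff₀ ha]
          nlinarith
        nlinarith [norm_nonneg (inner ℂ ψ₁ φ : ℂ), hx'0]
      have hfs := fs_bound ψ₁ φ ψ hψ₁ hφ.1 hψn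
      have hmono := mono_bound (norm_nonneg (inner ℂ ψ₁ φ : ℂ)) hxb hc1 hcγ hγ1
      have h4 : ‖(inner ℂ φ ψ : ℂ)‖ ≤ K := by
        rw [hKform]
        linarith
      nlinarith [norm_nonneg (inner ℂ φ ψ : ℂ), hK0]
    unfold egPure
    linarith
  apply le_csInf
  · -- nonemptiness via spectral decomposition
    have hsym := hself.isSymmetric
    set N := Module.finrank ℂ (EuclideanSpace ℂ (∀ i, Fin (d i))) with hN
    obtain ⟨b, lam, heigb⟩ : ∃ (b : OrthonormalBasis (Fin N) ℂ (EuclideanSpace ℂ (∀ i, Fin (d i))))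
        (lam : Fin N → ℝ), ∀ i, ρ (b i) = (lam i : ℂ) • b i := by
      refine ⟨hsym.eigenvectorBasis hN.symm, hsym.eigenvalues hN.symm, fun i => ?_⟩
      exact hsym.apply_eigenvectorBasis hN.symm i
    have hb1 : ∀ i, ‖b i‖ = 1 := fun i => b.orthonormal.1 i
    have hbinner : ∀ i, (inner ℂ (b i) (b i) : ℂ) = 1 := by
      intro i
      rw [inner_self_eq_norm_sq_to_K, hb1]
      norm_num
    have hρdec : ρ = ∑ i, ((lam i : ℂ) • rankOne d (b i)) := by
      apply ContinuousLinearMap.ext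
      intro v
      have hv := b.sum_repr' v
      conv_lhs => rw [← hv]
      rw [map_sum, ContinuousLinearMap.sum_apply]
      apply Finset.sum_congr rfl
      intro i _
      rw [map_smul, heigb i, ContinuousLinearMap.smul_apply]
      rw [show rankOne d (b i) v = (inner ℂ (b i) v : ℂ) • b i from rfl]
      rw [smul_smul, smul_smul, mul_comm]
    have htr : (∑ i, (lam i : ℂ)) = 1 := by
      rw [← htrace, LinearMap.trace_eq_matrix_trace ℂ b.toBasis, Matrix.trace]
      apply Finset.sum_congr rfl
      intro i _
      rw [Matrix.diag_apply, LinearMap.toMatrix_apply]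
      simp only [OrthonormalBasis.coe_toBasis, ContinuousLinearMap.coe_coe]
      rw [heigb i, map_smul]
      simp [Module.Basis.repr_self]
    have hw1 : ∑ i, lam i = 1 := by exact_mod_cast htr
    have hw0 : ∀ i, 0 ≤ lam i := by
      intro i
      have h := hpos (b i)
      rw [heigb i, inner_smul_right, hbinner i, mul_one] at h
      simpa using h
    exact ⟨∑ i, lam i * egPure d (b i), N, lam, fun i => b i, hw0, hw1, hb1, hρdec, rfl⟩
  · rintro r ⟨m, w, ψ, hw0, hw1, hψn, hρ, rfl⟩
    set γ : Fin m → ℝ := fun j => ‖(inner ℂ ψ₁ (ψ j) : ℂ)‖ with hγ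
    have hγ0 : ∀ j, 0 ≤ γ j := fun j => norm_nonneg _
    have hγ1 : ∀ j, γ j ≤ 1 := by
      intro j
      have h := norm_inner_le_norm (𝕜 := ℂ) ψ₁ (ψ j)
      rw [hψ₁, hψn j, mul_one] at h
      exact h
    have hA : a₁ = ∑ j, w j * γ j ^ 2 := by
      have h1 : (inner ℂ ψ₁ (ρ ψ₁) : ℂ) = (a₁ : ℂ) := by
        rw [heig, inner_smul_right, inner_self_eq_norm_sq_to_K, hψ₁]
        norm_num
      have h2 : (inner ℂ ψ₁ (ρ ψ₁) : ℂ) = ∑ j, ((w j * γ j ^ 2 : ℝ) : ℂ) := by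
        rw [hρ, ContinuousLinearMap.sum_apply, inner_sum]
        apply Finset.sum_congr rfl
        intro j _
        rw [ContinuousLinearMap.smul_apply, inner_smul_right]
        rw [show rankOne d (ψ j) ψ₁ = (inner ℂ (ψ j) ψ₁ : ℂ) • (ψ j) from rfl]
        rw [inner_smul_right, ← inner_conj_symm (ψ j) ψ₁, mul_comm ((starRingEnd ℂ) _) _,
          Complex.mul_conj]
        rw [Complex.normSq_eq_norm_sq]
        push_cast
        ring
      rw [h1] at h2
      exact_mod_cast h2
    set μ := ∑ j ∈ Finset.univ.filter (fun j => c ≤ γ j), w j with hμ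
    have hsplit := Finset.sum_filter_add_sum_filter_not Finset.univ (fun j => c ≤ γ j) w
    rw [hw1, ← hμ] at hsplit
    have hineq : a₁ ≤ μ + (1 - μ) * c ^ 2 := by
      rw [hA, ← Finset.sum_filter_add_sum_filter_not Finset.univ (fun j => c ≤ γ j)
        (fun j => w j * γ j ^ 2)]
      have hT1 : ∑ j ∈ Finset.univ.filter (fun j => c ≤ γ j), w j * γ j ^ 2 ≤ μ := by
        rw [hμ]
        apply Finset.sum_le_sum
        intro j _
        have h2 : γ j ^ 2 ≤ 1 := by nlinarith [hγ0 j, hγ1 j]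
        nlinarith [hw0 j]
      have hT2 : ∑ j ∈ Finset.univ.filter (fun j => ¬ c ≤ γ j), w j * γ j ^ 2
          ≤ (1 - μ) * c ^ 2 := by
        have hc2' : (1 - μ) * c ^ 2
            = ∑ j ∈ Finset.univ.filter (fun j => ¬ c ≤ γ j), w j * c ^ 2 := by
          rw [← Finset.sum_mul]
          have h5 : ∑ j ∈ Finset.univ.filter (fun j => ¬ c ≤ γ j), w j = 1 - μ := by
            linarith [hsplit]
          rw [h5]
        rw [hc2']
        apply Finset.sum_le_sum
        intro j hj
        have hj' : ¬ c ≤ γ j := (Finset.mem_filter.mp hj).2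
        push_neg at hj'
        have h2 : γ j ^ 2 ≤ c ^ 2 := by nlinarith [hγ0 j]
        exact mul_le_mul_of_nonneg_left h2 (hw0 j)
      linarith
    have hμb : (a₁ - c ^ 2) / (1 - c ^ 2) ≤ μ := by
      rw [div_le_iff₀ (by nlinarith : (0:ℝ) < 1 - c ^ 2)]
      nlinarith
    have h1K : 0 ≤ 1 - K ^ 2 := by linarith
    calc (a₁ - c ^ 2) / (1 - c ^ 2) * (1 - K ^ 2) ≤ μ * (1 - K ^ 2) :=
        mul_le_mul_of_nonneg_right hμb h1K
      _ = ∑ j ∈ Finset.univ.filter (fun j => c ≤ γ j), w j * (1 - K ^ 2) := by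
          rw [hμ, Finset.sum_mul]
      _ ≤ ∑ j ∈ Finset.univ.filter (fun j => c ≤ γ j), w j * egPure d (ψ j) := by
          apply Finset.sum_le_sum
          intro j hj
          have hcγ : c ≤ γ j := (Finset.mem_filter.mp hj).2
          exact mul_le_mul_of_nonneg_left (hKey (ψ j) (hψn j) hcγ) (hw0 j)
      _ ≤ ∑ j, w j * egPure d (ψ j) := by
          apply Finset.sum_le_sum_of_subset_of_nonneg (Finset.subset_univ _)
          intro j _ _
          exact mul_nonneg (hw0 j) (hEgP (ψ j) (hψn j))


end
end
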